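/- Let Ω > 0, λ > 0, T > 0, N ∈ ℕ, and let g ∈ PW_Ω with β ≥ sup_{t ∈ ℝ} |g(t)| satisfying (TΩe)^N · β < λ. Define γ[k] = g(kT) and the modulo samples y[k] = M_λ(γ[k]) for k ∈ ℤ. Then for every k ∈ ℤ: (Δ^N γ)[k] = M_λ((Δ^N y)[k]). Consequently, the residual ε[k] = γ[k] − y[k], which takes values in 2λℤ, satisfies (Δ^N ε)[k] = M_λ((Δ^N y)[k]) − (Δ^N y)[k] for every k ∈ ℤ, so Δ^N ε is computable from the modulo samples alone. -/

import Mathlib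

open MeasureTheory Real

/-- The centered `2λ`-modulo operator `M_λ(t) = t − 2λ·⌊(t + λ)/(2λ)⌋`. -/
noncomputable def Mlam (lam t : ℝ) : ℝ := t - 2 * lam * ⌊(t + lam) / (2 * lam)⌋

/-- Membership in the Paley–Wiener space `PW_Ω`: `g(t) = ∫_{−Ω}^{Ω} φ(ω) e^{iωt} dω`
for some square-integrable `φ : [−Ω,Ω] → ℂ`. -/
def IsPW (Ω : ℝ) (g : ℝ → ℝ) : Prop :=
  ∃ φ : ℝ → ℂ, MemLp φ 2 (volume.restrict (Set.Icc (-Ω) Ω)) ∧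
    ∀ t : ℝ, (g t : ℂ) =
      ∫ ω in Set.Icc (-Ω) Ω, φ ω * Complex.exp (Complex.I * (ω : ℂ) * (t : ℂ))

/-- The forward difference operator `(Δa)[k] = a[k+1] − a[k]` on sequences. -/
noncomputable def fdiff (a : ℤ → ℝ) : ℤ → ℝ := fun k => a (k + 1) - a k

open Complex
open scoped ENNReal NNReal

noncomputable section

lemma bern2 : Polynomial.bernoulli 2 =
    Polynomial.monomial 2 (1 : ℚ) + Polynomial.monomial 1 (-1)
      + Polynomial.monomial 0 (1/6 : ℚ) := by
  rw [Polynomial.bernoulli_def]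
  rw [Finset.sum_range_succ, Finset.sum_range_succ, Finset.sum_range_one]
  norm_num [bernoulli, bernoulli'_two, bernoulli'_one]
  ring

lemma cos_sum {x : ℝ} (hx : x ∈ Set.Icc (0:ℝ) 1) :
    HasSum (fun n : ℕ => 1 / (n : ℝ) ^ 2 * Real.cos (2 * π * n * x))
      (π ^ 2 * (x ^ 2 - x + 1/6)) := by
  have h := hasSum_one_div_nat_pow_mul_cos (k := 1) one_ne_zero hx
  have hb : (Polynomial.map (algebraMap ℚ ℝ) (Polynomial.bernoulli 2)).eval x
      = x ^ 2 - x + 1/6 := by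
    rw [bern2]
    simp [Polynomial.eval_monomial]
    ring
  rw [show 2 * 1 = 2 from rfl, hb] at h
  convert h using 2
  norm_num [Nat.factorial]
  ring

lemma C_sum {θ : ℝ} (hθ : θ ∈ Set.Icc (0:ℝ) (2*π)) :
    HasSum (fun n : ℕ => Real.cos (n * θ) / (n : ℝ) ^ 2)
      (θ ^ 2 / 4 - π * θ / 2 + π ^ 2 / 6) := by
  have hπ : (0:ℝ) < π := pi_pos
  have hx : θ / (2 * π) ∈ Set.Icc (0:ℝ) 1 := by
    constructor
    · exact div_nonneg hθ.1 (by positivity)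
    · rw [div_le_one (by positivity)]; exact hθ.2
  have h := cos_sum hx
  have he : ∀ n : ℕ, 2 * π * n * (θ / (2 * π)) = n * θ := by
    intro n; field_simp
  simp only [he] at h
  have hval : π ^ 2 * ((θ / (2 * π)) ^ 2 - θ / (2 * π) + 1/6)
      = θ ^ 2 / 4 - π * θ / 2 + π ^ 2 / 6 := by
    field_simp
    ring
  rw [hval] at h
  exact h.congr_fun fun n => by rw [div_eq_mul_one_div, mul_comm]

lemma Codd_sum {θ : ℝ} (hθ : θ ∈ Set.Icc (0:ℝ) π) :
    HasSum (fun n : ℕ => Real.cos ((2 * (n:ℝ) + 1) * θ) / (2 * (n:ℝ) + 1) ^ 2)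
      (π ^ 2 / 8 - π * θ / 4) := by
  have hπ : (0:ℝ) < π := pi_pos
  set f : ℕ → ℝ := fun n => Real.cos (n * θ) / (n : ℝ) ^ 2 with hf
  have hC : HasSum f (θ ^ 2 / 4 - π * θ / 2 + π ^ 2 / 6) :=
    C_sum ⟨hθ.1, by linarith [hθ.2]⟩
  have hC2 : HasSum (fun n : ℕ => Real.cos (n * (2 * θ)) / (n : ℝ) ^ 2)
      ((2*θ) ^ 2 / 4 - π * (2*θ) / 2 + π ^ 2 / 6) :=
    C_sum ⟨by linarith [hθ.1], by linarith [hθ.2]⟩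
  have hE : HasSum (fun n : ℕ => f (2 * n))
      (((2*θ) ^ 2 / 4 - π * (2*θ) / 2 + π ^ 2 / 6)/4) := by
    refine (hC2.div_const 4).congr_fun fun n => ?_
    simp only [hf]
    push_cast
    cases n with
    | zero => simp
    | succ m =>
      rw [div_div]
      congr 1
      · ring_nf
      · ring
  have hsumm : Summable f := by
    have hs : Summable (fun n : ℕ => 1 / (n:ℝ) ^ 2) := by
      rw [summable_one_div_nat_pow]; norm_num
    refine hs.of_norm_bounded fun n => ?_
    cases n with
    | zero => simp [hf]
    | succ m =>
      simp only [hf, norm_div, norm_pow, Real.norm_eq_abs]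
      rw [_root_.abs_of_nonneg (by positivity : (0:ℝ) ≤ ((m+1:ℕ):ℝ))]
      rw [div_le_div_iff₀ (by positivity) (by positivity)]
      have := abs_cos_le_one (((m+1:ℕ):ℝ) * θ)
      nlinarith [sq_nonneg ((m+1:ℕ):ℝ)]
  have hsummO : Summable (fun n : ℕ => f (2 * n + 1)) :=
    hsumm.comp_injective fun a b hab => by omega
  obtain ⟨O, hO⟩ := hsummO
  have huniq := (hE.even_add_odd hO).unique hC
  have hOval : O = π ^ 2 / 8 - π * θ / 4 := by nlinarith [huniq]
  rw [hOval] at hO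
  refine hO.congr_fun fun n => ?_
  simp only [hf]
  push_cast
  ring_nf

lemma sin_odd_pi_div_two (n : ℕ) : Real.sin ((2 * (n:ℝ) + 1) * (π/2)) = (-1) ^ n := by
  induction n with
  | zero => norm_num
  | succ m ih =>
    rw [show (2 * ((m+1:ℕ):ℝ) + 1) * (π/2) = (2 * (m:ℝ) + 1) * (π/2) + π by push_cast; ring]
    rw [Real.sin_add_pi, ih]
    simp [pow_succ]

lemma F_sum {θ : ℝ} (hθ : θ ∈ Set.Icc (-(π/2)) (π/2)) :
    HasSum (fun n : ℕ => (-1) ^ n * Real.sin ((2 * (n:ℝ) + 1) * θ) / (2 * (n:ℝ) + 1) ^ 2)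
      (π * θ / 4) := by
  have hπ : (0:ℝ) < π := pi_pos
  have h1 := Codd_sum (θ := π/2 - θ) ⟨by linarith [hθ.2], by linarith [hθ.1]⟩
  have h2 := Codd_sum (θ := π/2 + θ) ⟨by linarith [hθ.1], by linarith [hθ.2]⟩
  have h := (h1.sub h2).div_const 2
  have hval : ((π ^ 2 / 8 - π * (π/2 - θ) / 4) - (π ^ 2 / 8 - π * (π/2 + θ) / 4)) / 2
      = π * θ / 4 := by ring
  rw [hval] at h
  refine h.congr_fun fun n => ?_
  have key : Real.cos ((2 * (n:ℝ) + 1) * (π/2 - θ)) - Real.cos ((2 * (n:ℝ) + 1) * (π/2 + θ))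
      = 2 * ((-1:ℝ)^n) * Real.sin ((2 * (n:ℝ) + 1) * θ) := by
    rw [show (2 * (n:ℝ) + 1) * (π/2 - θ) = (2 * (n:ℝ) + 1) * (π/2) - (2 * (n:ℝ) + 1) * θ by ring]
    rw [show (2 * (n:ℝ) + 1) * (π/2 + θ) = (2 * (n:ℝ) + 1) * (π/2) + (2 * (n:ℝ) + 1) * θ by ring]
    rw [Real.cos_sub, Real.cos_add, sin_odd_pi_div_two]
    ring
  rw [div_sub_div_same, key]
  ring

/-- signed coefficients -/
def csgn (k : ℤ) : ℝ := (-1) ^ k.natAbs / (2 * (k:ℝ) + 1) ^ 2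

lemma odd_ne_zero (k : ℤ) : 2 * (k:ℝ) + 1 ≠ 0 := by
  have : ((2 * k + 1 : ℤ) : ℝ) = 2 * (k:ℝ) + 1 := by push_cast; ring
  rw [← this]
  exact_mod_cast (by omega : (2 * k + 1 : ℤ) ≠ 0)

lemma abs_csgn (k : ℤ) : |csgn k| = 1 / (2 * (k:ℝ) + 1) ^ 2 := by
  rw [csgn, abs_div, _root_.abs_pow]
  simp [_root_.abs_of_nonneg (sq_nonneg (2 * (k:ℝ) + 1))]

lemma odd_sq_sum : HasSum (fun n : ℕ => 1 / (2 * (n:ℝ) + 1) ^ 2) (π ^ 2 / 8) := by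
  have h := Codd_sum (θ := 0) ⟨le_refl 0, pi_pos.le⟩
  simp only [mul_zero, Real.cos_zero, zero_div, sub_zero] at h
  exact h
lemma csum : HasSum (fun k : ℤ => |csgn k|) (π ^ 2 / 4) := by
  have hpos : HasSum (fun n : ℕ => |csgn (n : ℤ)|) (π ^ 2 / 8) := by
    refine odd_sq_sum.congr_fun fun n => ?_
    rw [abs_csgn]; norm_num
  have hneg : HasSum (fun n : ℕ => |csgn (-((n:ℤ)+1))|) (π ^ 2 / 8) := by
    refine odd_sq_sum.congr_fun fun n => ?_
    rw [abs_csgn]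
    have : 2 * ((-((n:ℤ)+1) : ℤ) : ℝ) + 1 = -(2 * (n:ℝ) + 1) := by push_cast; ring
    rw [this, neg_sq]
  have h := HasSum.of_nat_of_neg_add_one (f := fun k : ℤ => |csgn k|) hpos hneg
  rw [show π ^ 2 / 8 + π ^ 2 / 8 = π ^ 2 / 4 by ring] at h
  exact h

lemma core {θ : ℝ} (hθ : θ ∈ Set.Icc (-(π/2)) (π/2)) :
    HasSum (fun k : ℤ => (csgn k : ℂ) * Complex.exp (Complex.I * ((2 * (k:ℝ) + 1) * θ : ℝ)))
      (Complex.I * ((π * θ / 2 : ℝ) : ℂ)) := by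
  set f : ℤ → ℂ := fun k => (csgn k : ℂ) * Complex.exp (Complex.I * ((2 * (k:ℝ) + 1) * θ : ℝ))
    with hf
  have hnorm : ∀ k : ℤ, ‖f k‖ = 1 / (2 * (k:ℝ) + 1) ^ 2 := by
    intro k
    rw [hf]
    simp only [norm_mul, Complex.norm_real, Real.norm_eq_abs]
    rw [mul_comm Complex.I, Complex.norm_exp_ofReal_mul_I, mul_one, abs_csgn]
  have hsumm : Summable f := by
    have h1 : Summable (fun k : ℤ => |csgn k|) := csum.summable
    refine h1.of_norm_bounded fun k => ?_
    rw [hnorm, abs_csgn]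
  have hsA : Summable (fun n : ℕ => f n) :=
    hsumm.comp_injective (fun a b hab => by exact_mod_cast hab)
  have hsB : Summable (fun n : ℕ => f (-((n:ℤ)+1))) :=
    hsumm.comp_injective (fun a b hab => by omega)
  obtain ⟨A, hA⟩ := hsA
  obtain ⟨B, hB⟩ := hsB
  have htot : HasSum f (A + B) := HasSum.of_nat_of_neg_add_one (f := f) hA hB
  -- the paired sum
  have hpair : HasSum (fun n : ℕ => f n + f (-((n:ℤ)+1))) (Complex.I * ((π * θ / 2 : ℝ) : ℂ)) := by
    have hr := (Complex.hasSum_ofReal.mpr (F_sum hθ)).mul_left (2 * Complex.I)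
    rw [show (2 * Complex.I) * ((π * θ / 4 : ℝ) : ℂ) = Complex.I * ((π * θ / 2 : ℝ) : ℂ) by
      push_cast; ring] at hr
    refine hr.congr_fun fun n => ?_
    -- termwise identity
    have e1 : csgn ((n:ℤ)) = (-1) ^ n / (2 * (n:ℝ) + 1) ^ 2 := by
      rw [csgn]
      norm_num
    have e2 : csgn (-((n:ℤ)+1)) = -((-1) ^ n) / (2 * (n:ℝ) + 1) ^ 2 := by
      rw [csgn, show Int.natAbs (-((n:ℤ)+1)) = n + 1 by omega]
      have : 2 * ((-((n:ℤ)+1) : ℤ) : ℝ) + 1 = -(2 * (n:ℝ) + 1) := by push_cast; ring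
      rw [this, neg_sq, pow_succ]
      ring
    rw [hf]
    simp only
    rw [e1, e2]
    push_cast
    rw [show 2 * (-((n:ℂ)+1)) + 1 = -(2 * (n:ℂ) + 1) by ring]
    set z : ℂ := (2 * (n:ℂ) + 1) * (θ:ℂ) with hz
    rw [show -(2 * (n:ℂ) + 1) * (θ:ℂ) = -z by rw [hz]; ring]
    rw [mul_comm Complex.I z, mul_comm Complex.I (-z), Complex.exp_mul_I, Complex.exp_mul_I,
      Complex.cos_neg, Complex.sin_neg]
    ring
  have : A + B = Complex.I * ((π * θ / 2 : ℝ) : ℂ) := (hA.add hB).unique hpair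
  rw [this] at htot
  exact htot

def tau (Ω : ℝ) (k : ℤ) : ℝ := (2 * (k:ℝ) + 1) * π / (2 * Ω)

def dcoef (Ω : ℝ) (k : ℤ) : ℝ := 4 * Ω / π ^ 2 * csgn k

lemma dsum {Ω : ℝ} (hΩ : 0 < Ω) : HasSum (fun k : ℤ => |dcoef Ω k|) Ω := by
  have h := csum.mul_left (4 * Ω / π ^ 2)
  have hval : 4 * Ω / π ^ 2 * (π ^ 2 / 4) = Ω := by
    field_simp
  rw [hval] at h
  refine h.congr_fun fun k => ?_
  rw [dcoef, abs_mul, _root_.abs_of_nonneg (by positivity : (0:ℝ) ≤ 4 * Ω / π ^ 2)]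

lemma multiplier {Ω : ℝ} (hΩ : 0 < Ω) {ω : ℝ} (hω : ω ∈ Set.Icc (-Ω) Ω) :
    HasSum (fun k : ℤ => ((dcoef Ω k : ℝ) : ℂ) * Complex.exp (Complex.I * ((ω * tau Ω k : ℝ) : ℂ)))
      (Complex.I * (ω : ℂ)) := by
  have hπ : (0:ℝ) < π := pi_pos
  set θ : ℝ := ω * (π / (2 * Ω)) with hθdef
  have hθ : θ ∈ Set.Icc (-(π/2)) (π/2) := by
    constructor
    · rw [hθdef]
      have := hω.1
      rw [neg_le, show -(ω * (π / (2*Ω))) = (-ω) * (π / (2*Ω)) by ring]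
      calc (-ω) * (π / (2*Ω)) ≤ Ω * (π / (2*Ω)) := by
            apply mul_le_mul_of_nonneg_right (by linarith) (by positivity)
        _ = π/2 := by field_simp
    · rw [hθdef]
      calc ω * (π / (2*Ω)) ≤ Ω * (π / (2*Ω)) := by
            apply mul_le_mul_of_nonneg_right hω.2 (by positivity)
        _ = π/2 := by field_simp
  have h := (core hθ).mul_left ((4 * Ω / π ^ 2 : ℝ) : ℂ)
  have hval : ((4 * Ω / π ^ 2 : ℝ) : ℂ) * (Complex.I * ((π * θ / 2 : ℝ) : ℂ)) = Complex.I * (ω : ℂ) := by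
    have : (4 * Ω / π ^ 2 : ℝ) * (π * θ / 2) = ω := by
      rw [hθdef]; field_simp; ring
    calc ((4 * Ω / π ^ 2 : ℝ) : ℂ) * (Complex.I * ((π * θ / 2 : ℝ) : ℂ))
        = Complex.I * (((4 * Ω / π ^ 2 : ℝ) * (π * θ / 2) : ℝ) : ℂ) := by push_cast; ring
      _ = Complex.I * (ω : ℂ) := by rw [this]
  rw [hval] at h
  refine h.congr_fun fun k => ?_
  rw [dcoef]
  have harg : (2 * (k:ℝ) + 1) * θ = ω * tau Ω k := by
    rw [hθdef, tau]; field_simp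
  rw [harg]
  push_cast
  ring

lemma norm_exp_I_mul_mul (ω v : ℝ) : ‖Complex.exp (Complex.I * (ω:ℂ) * (v:ℂ))‖ = 1 := by
  rw [show Complex.I * (ω:ℂ) * (v:ℂ) = ((ω * v : ℝ) : ℂ) * Complex.I by push_cast; ring]
  rw [Complex.norm_exp_ofReal_mul_I]

lemma G_bound {Ω : ℝ} (hΩ : 0 < Ω) (φ : ℝ → ℂ)
    (hφi : Integrable φ (volume.restrict (Set.Icc (-Ω) Ω)))
    (g : ℝ → ℝ)
    (hrep : ∀ t : ℝ, (g t : ℂ) =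
      ∫ ω in Set.Icc (-Ω) Ω, φ ω * Complex.exp (Complex.I * (ω : ℂ) * (t : ℂ)))
    (β : ℝ) (hβ : ∀ t, |g t| ≤ β) (u : ℝ) :
    ‖∫ ω in Set.Icc (-Ω) Ω,
        (Complex.I * (ω:ℂ)) * (φ ω * Complex.exp (Complex.I * (ω:ℂ) * (u:ℂ)))‖ ≤ Ω * β := by
  set μ := volume.restrict (Set.Icc (-Ω) Ω) with hμ
  have hβ0 : 0 ≤ β := le_trans (abs_nonneg _) (hβ 0)
  set F : ℤ → ℝ → ℂ := fun k ω =>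
    (dcoef Ω k : ℂ) * (φ ω * Complex.exp (Complex.I * (ω:ℂ) * ((u + tau Ω k : ℝ) : ℂ))) with hF
  have hpt : ∀ ω ∈ Set.Icc (-Ω) Ω, HasSum (fun k => F k ω)
      ((Complex.I * (ω:ℂ)) * (φ ω * Complex.exp (Complex.I * (ω:ℂ) * (u:ℂ)))) := by
    intro ω hω
    have h := (multiplier hΩ hω).mul_right (φ ω * Complex.exp (Complex.I * (ω:ℂ) * (u:ℂ)))
    refine h.congr_fun fun k => ?_
    rw [hF]
    simp only
    have harg : Complex.I * (ω:ℂ) * (((u + tau Ω k : ℝ)):ℂ)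
        = Complex.I * ((ω * tau Ω k : ℝ):ℂ) + Complex.I * (ω:ℂ) * (u:ℂ) := by
      push_cast; ring
    rw [harg, Complex.exp_add]
    ring
  have haes : ∀ k : ℤ, AEStronglyMeasurable (F k) μ := by
    intro k
    apply AEStronglyMeasurable.const_mul
    apply hφi.aestronglyMeasurable.mul
    apply Continuous.aestronglyMeasurable
    exact Complex.continuous_exp.comp
      ((continuous_const.mul Complex.continuous_ofReal).mul continuous_const)
  have hnorm1 : ∀ k (ω : ℝ), ‖F k ω‖₊ ≤ ‖dcoef Ω k‖₊ * ‖φ ω‖₊ := by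
    intro k ω
    rw [hF]
    simp only
    rw [nnnorm_mul, nnnorm_mul]
    have h1 : ‖((dcoef Ω k : ℝ) : ℂ)‖₊ = ‖dcoef Ω k‖₊ := by
      ext; simp [Complex.norm_real]
    rw [h1]
    apply mul_le_mul_right
    have h2 : ‖Complex.exp (Complex.I * (ω:ℂ) * ((u + tau Ω k : ℝ) : ℂ))‖₊ = 1 := by
      ext
      simp only [coe_nnnorm, NNReal.coe_one]
      exact norm_exp_I_mul_mul ω (u + tau Ω k)
    rw [h2, mul_one]
  have hsum_d : Summable (fun k : ℤ => |dcoef Ω k|) := (dsum hΩ).summable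
  have hsum_dnn : Summable (fun k : ℤ => ‖dcoef Ω k‖₊) := by
    rw [← NNReal.summable_coe]
    simpa [Real.nnnorm_abs] using hsum_d
  have htop : ∑' k : ℤ, ∫⁻ ω, ‖F k ω‖₊ ∂μ ≠ ⊤ := by
    have hle : ∑' k : ℤ, ∫⁻ ω, ‖F k ω‖₊ ∂μ
        ≤ ∑' k : ℤ, (‖dcoef Ω k‖₊ : ℝ≥0∞) * ∫⁻ ω, ‖φ ω‖₊ ∂μ := by
      apply ENNReal.tsum_le_tsum
      intro k
      calc ∫⁻ ω, ‖F k ω‖₊ ∂μ ≤ ∫⁻ ω, (‖dcoef Ω k‖₊ : ℝ≥0∞) * ‖φ ω‖₊ ∂μ := by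
            apply lintegral_mono
            intro ω
            simp only [← ENNReal.coe_mul]
            exact ENNReal.coe_le_coe.mpr (hnorm1 k ω)
        _ = (‖dcoef Ω k‖₊ : ℝ≥0∞) * ∫⁻ ω, ‖φ ω‖₊ ∂μ :=
            lintegral_const_mul' _ _ ENNReal.coe_ne_top
    apply ne_top_of_le_ne_top _ hle
    rw [ENNReal.tsum_mul_right]
    apply ENNReal.mul_ne_top
    · exact ENNReal.tsum_coe_ne_top_iff_summable.mpr hsum_dnn
    · exact hφi.2.ne
  have hswap := integral_tsum haes htop
  have hleft : (∫ ω, (Complex.I * (ω:ℂ)) * (φ ω * Complex.exp (Complex.I * (ω:ℂ) * (u:ℂ))) ∂μ)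
      = ∫ ω, (∑' k, F k ω) ∂μ := by
    apply integral_congr_ae
    filter_upwards [ae_restrict_mem measurableSet_Icc] with ω hω
    exact ((hpt ω hω).tsum_eq).symm
  have hterm : ∀ k : ℤ, ∫ ω, F k ω ∂μ = (dcoef Ω k : ℂ) * ((g (u + tau Ω k) : ℝ) : ℂ) := by
    intro k
    rw [hF]
    simp only
    rw [MeasureTheory.integral_const_mul]
    rw [← hrep]
  rw [hleft, hswap]
  simp_rw [hterm]
  have hsummable : Summable (fun k : ℤ => ‖(dcoef Ω k : ℂ) * ((g (u + tau Ω k) : ℝ) : ℂ)‖) := by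
    apply Summable.of_nonneg_of_le (fun k => norm_nonneg _) _ (hsum_d.mul_right β)
    intro k
    rw [norm_mul, Complex.norm_real, Complex.norm_real, Real.norm_eq_abs, Real.norm_eq_abs]
    exact mul_le_mul_of_nonneg_left (hβ _) (abs_nonneg _)
  calc ‖∑' k : ℤ, (dcoef Ω k : ℂ) * ((g (u + tau Ω k) : ℝ) : ℂ)‖
      ≤ ∑' k : ℤ, ‖(dcoef Ω k : ℂ) * ((g (u + tau Ω k) : ℝ) : ℂ)‖ :=
        norm_tsum_le_tsum_norm hsummable
    _ ≤ ∑' k : ℤ, |dcoef Ω k| * β := by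
        apply hsummable.tsum_le_tsum _ (hsum_d.mul_right β)
        intro k
        rw [norm_mul, Complex.norm_real, Complex.norm_real, Real.norm_eq_abs, Real.norm_eq_abs]
        exact mul_le_mul_of_nonneg_left (hβ _) (abs_nonneg _)
    _ = Ω * β := ((dsum hΩ).mul_right β).tsum_eq

lemma pw_step {Ω T β : ℝ} (hΩ : 0 < Ω) (hT : 0 ≤ T) {g : ℝ → ℝ} (hg : IsPW Ω g)
    (hβ : ∀ t, |g t| ≤ β) :
    IsPW Ω (fun t => g (t + T) - g t) ∧ (∀ t, |g (t + T) - g t| ≤ T * Ω * β) := by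
  obtain ⟨φ, hφ2, hrep⟩ := hg
  have hfin : IsFiniteMeasure (volume.restrict (Set.Icc (-Ω) Ω)) :=
    ⟨by rw [Measure.restrict_apply_univ]; exact measure_Icc_lt_top⟩
  have hφi : Integrable φ (volume.restrict (Set.Icc (-Ω) Ω)) :=
    hφ2.integrable (by norm_num)
  have hcexp : ∀ v : ℝ, Continuous (fun ω : ℝ => Complex.exp (Complex.I * (ω:ℂ) * (v:ℂ))) :=
    fun v => Complex.continuous_exp.comp
      ((continuous_const.mul Complex.continuous_ofReal).mul continuous_const)
  have h1 : ∀ v : ℝ, Integrable (fun ω => φ ω * Complex.exp (Complex.I * (ω:ℂ) * (v:ℂ)))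
      (volume.restrict (Set.Icc (-Ω) Ω)) := by
    intro v
    have h2 := hφi.bdd_mul ((hcexp v).aestronglyMeasurable)
      (Filter.Eventually.of_forall fun ω => le_of_eq (norm_exp_I_mul_mul ω v))
    exact h2.congr (Filter.Eventually.of_forall fun ω => mul_comm _ _)
  constructor
  · refine ⟨fun ω => φ ω * (Complex.exp (Complex.I * (ω:ℂ) * (T:ℂ)) - 1), ?_, ?_⟩
    · refine MemLp.of_le_mul (c := 2) hφ2
        (hφ2.aestronglyMeasurable.mul (((hcexp T).sub continuous_const).aestronglyMeasurable)) ?_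
      refine Filter.Eventually.of_forall fun ω => ?_
      rw [norm_mul, mul_comm]
      apply mul_le_mul_of_nonneg_right _ (norm_nonneg _)
      calc ‖Complex.exp (Complex.I * (ω:ℂ) * (T:ℂ)) - 1‖
          ≤ ‖Complex.exp (Complex.I * (ω:ℂ) * (T:ℂ))‖ + ‖(1:ℂ)‖ := norm_sub_le _ _
        _ = 2 := by rw [norm_exp_I_mul_mul, norm_one]; norm_num
    · intro t
      have e1 : ((g (t + T) - g t : ℝ) : ℂ) = ((g (t+T) : ℝ) : ℂ) - ((g t : ℝ) : ℂ) := by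
        push_cast; ring
      rw [e1, hrep, hrep, ← integral_sub (h1 (t+T)) (h1 t)]
      apply integral_congr_ae
      refine Filter.Eventually.of_forall fun ω => ?_
      simp only
      have e2 : Complex.I * (ω:ℂ) * (((t + T : ℝ)):ℂ)
          = Complex.I * (ω:ℂ) * (T:ℂ) + Complex.I * (ω:ℂ) * (t:ℂ) := by push_cast; ring
      rw [e2, Complex.exp_add]
      ring
  · intro t
    set G : ℝ → ℂ := fun s =>
      ∫ ω in Set.Icc (-Ω) Ω,
        (Complex.I * (ω:ℂ)) * (φ ω * Complex.exp (Complex.I * (ω:ℂ) * (s:ℂ))) with hG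
    have hderiv : ∀ s : ℝ,
        HasDerivAt (fun x : ℝ => ∫ ω in Set.Icc (-Ω) Ω,
          φ ω * Complex.exp (Complex.I * (ω:ℂ) * (x:ℂ))) (G s) s := by
      intro s
      have key := hasDerivAt_integral_of_dominated_loc_of_deriv_le
        (F := fun (x:ℝ) (ω:ℝ) => φ ω * Complex.exp (Complex.I * (ω:ℂ) * (x:ℂ)))
        (F' := fun (x:ℝ) (ω:ℝ) =>
          (Complex.I * (ω:ℂ)) * (φ ω * Complex.exp (Complex.I * (ω:ℂ) * (x:ℂ))))
        (x₀ := s) (s := Metric.ball s 1) (bound := fun ω => Ω * ‖φ ω‖)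
        (Metric.ball_mem_nhds s one_pos)
        (Filter.Eventually.of_forall fun x =>
          hφi.aestronglyMeasurable.mul ((hcexp x).aestronglyMeasurable))
        (h1 s)
        (((continuous_const.mul Complex.continuous_ofReal).aestronglyMeasurable).mul
          (hφi.aestronglyMeasurable.mul ((hcexp s).aestronglyMeasurable)))
        ?bnd (hφi.norm.const_mul Ω) ?dif
      · exact key.2
      case bnd =>
        filter_upwards [ae_restrict_mem measurableSet_Icc] with ω hω
        intro x hx
        simp only [norm_mul, norm_exp_I_mul_mul, mul_one, Complex.norm_I, one_mul,
          Complex.norm_real, Real.norm_eq_abs]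
        apply mul_le_mul_of_nonneg_right _ (norm_nonneg _)
        rw [abs_le]
        exact ⟨by linarith [hω.1], hω.2⟩
      case dif =>
        refine Filter.Eventually.of_forall fun ω => ?_
        intro x hx
        have hin : HasDerivAt (fun x : ℝ => Complex.I * (ω:ℂ) * (x:ℂ)) (Complex.I * (ω:ℂ)) x := by
          simpa using (Complex.ofRealCLM.hasDerivAt (x := x)).const_mul (Complex.I * (ω:ℂ))
        have hexp := hin.cexp
        have := hexp.const_mul (φ ω)
        refine this.congr_deriv ?_
        ring
    have hcont : Continuous G := by
      rw [hG]
      apply continuous_of_dominated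
        (F := fun (x:ℝ) (ω:ℝ) =>
          (Complex.I * (ω:ℂ)) * (φ ω * Complex.exp (Complex.I * (ω:ℂ) * (x:ℂ))))
        (bound := fun ω => Ω * ‖φ ω‖)
      · intro x
        exact ((continuous_const.mul Complex.continuous_ofReal).aestronglyMeasurable).mul
          (hφi.aestronglyMeasurable.mul ((hcexp x).aestronglyMeasurable))
      · intro x
        filter_upwards [ae_restrict_mem measurableSet_Icc] with ω hω
        simp only [norm_mul, norm_exp_I_mul_mul, mul_one, Complex.norm_I, one_mul,
          Complex.norm_real, Real.norm_eq_abs]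
        apply mul_le_mul_of_nonneg_right _ (norm_nonneg _)
        rw [abs_le]
        exact ⟨by linarith [hω.1], hω.2⟩
      · exact hφi.norm.const_mul Ω
      · refine Filter.Eventually.of_forall fun ω => ?_
        exact continuous_const.mul (continuous_const.mul (Complex.continuous_exp.comp
          ((continuous_const.mul continuous_const).mul Complex.continuous_ofReal)))
    have hFTC : ((g (t + T) : ℝ) : ℂ) - ((g t : ℝ) : ℂ) = ∫ s in t..(t+T), G s := by
      rw [hrep (t+T), hrep t]
      exact (intervalIntegral.integral_eq_sub_of_hasDerivAt (fun s _ => hderiv s)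
        ((hcont.intervalIntegrable t (t+T)))).symm
    have hbnd : ‖∫ s in t..(t+T), G s‖ ≤ Ω * β * |t + T - t| := by
      apply intervalIntegral.norm_integral_le_of_norm_le_const
      intro x hx
      exact G_bound hΩ φ hφi g hrep β hβ x
    rw [show t + T - t = T by ring, _root_.abs_of_nonneg hT] at hbnd
    have : |g (t + T) - g t| = ‖((g (t + T) - g t : ℝ) : ℂ)‖ := by
      rw [Complex.norm_real, Real.norm_eq_abs]
    rw [this]
    have e1 : ((g (t + T) - g t : ℝ) : ℂ) = ((g (t+T) : ℝ) : ℂ) - ((g t : ℝ) : ℂ) := by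
      push_cast; ring
    rw [e1, hFTC]
    calc ‖∫ s in t..(t+T), G s‖ ≤ Ω * β * T := hbnd
      _ = T * Ω * β := by ring

/-- function-level forward difference -/
def Dop (T : ℝ) (g : ℝ → ℝ) : ℝ → ℝ := fun t => g (t + T) - g t

lemma pw_iter {Ω T : ℝ} (hΩ : 0 < Ω) (hT : 0 ≤ T) (N : ℕ) :
    ∀ (g : ℝ → ℝ) (β : ℝ), IsPW Ω g → (∀ t, |g t| ≤ β) →
      ∀ t, |(Dop T)^[N] g t| ≤ (T * Ω) ^ N * β := by
  induction N with
  | zero => intro g β hg hβ t; simpa using hβ t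
  | succ n ih =>
    intro g β hg hβ t
    rw [Function.iterate_succ_apply]
    have hstep := pw_step hΩ hT hg hβ
    have := ih (Dop T g) (T * Ω * β) hstep.1 hstep.2 t
    calc |(Dop T)^[n] (Dop T g) t| ≤ (T * Ω) ^ n * (T * Ω * β) := this
      _ = (T * Ω) ^ (n + 1) * β := by ring

lemma fdiff_iterate (T : ℝ) (N : ℕ) :
    ∀ (g : ℝ → ℝ) (k : ℤ),
      fdiff^[N] (fun m : ℤ => g (m * T)) k = (Dop T)^[N] g (k * T) := by
  induction N with
  | zero => intro g k; rfl
  | succ n ih =>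
    intro g k
    rw [Function.iterate_succ_apply, Function.iterate_succ_apply]
    have h : fdiff (fun m : ℤ => g (m * T)) = fun m : ℤ => (Dop T g) (m * T) := by
      funext m
      simp only [fdiff, Dop]
      congr 1
      push_cast
      ring
    rw [h, ih (Dop T g) k]

lemma fdiff_sub (N : ℕ) :
    ∀ (a b : ℤ → ℝ) (k : ℤ),
      fdiff^[N] (fun m => a m - b m) k = fdiff^[N] a k - fdiff^[N] b k := by
  induction N with
  | zero => intro a b k; rfl
  | succ n ih =>
    intro a b k
    rw [Function.iterate_succ_apply, Function.iterate_succ_apply, Function.iterate_succ_apply]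
    have h : fdiff (fun m => a m - b m) = fun m => fdiff a m - fdiff b m := by
      funext m; simp only [fdiff]; ring
    rw [h, ih (fdiff a) (fdiff b) k]

lemma fdiff_int {lam : ℝ} (N : ℕ) :
    ∀ (a : ℤ → ℝ), (∀ m, ∃ j : ℤ, a m = 2 * lam * j) →
      ∀ k, ∃ j : ℤ, fdiff^[N] a k = 2 * lam * j := by
  induction N with
  | zero => intro a h k; exact h k
  | succ n ih =>
    intro a h k
    rw [Function.iterate_succ_apply]
    apply ih (fdiff a)
    intro m
    obtain ⟨j1, hj1⟩ := h (m + 1)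
    obtain ⟨j2, hj2⟩ := h m
    exact ⟨j1 - j2, by rw [fdiff, hj1, hj2]; push_cast; ring⟩

lemma Mlam_add_int {lam : ℝ} (hlam : 0 < lam) (x : ℝ) (j : ℤ) :
    Mlam lam (x + 2 * lam * j) = Mlam lam x := by
  rw [Mlam, Mlam]
  have h : (x + 2 * lam * j + lam) / (2 * lam) = (x + lam) / (2 * lam) + j := by
    field_simp
    ring
  rw [h, Int.floor_add_intCast]
  push_cast
  ring

lemma Mlam_eq_self {lam x : ℝ} (hlam : 0 < lam) (h1 : -lam ≤ x) (h2 : x < lam) :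
    Mlam lam x = x := by
  rw [Mlam]
  have h : ⌊(x + lam) / (2 * lam)⌋ = 0 := by
    rw [Int.floor_eq_zero_iff]
    constructor
    · apply div_nonneg (by linarith) (by linarith)
    · rw [div_lt_one (by linarith)]
      linarith
  rw [h]
  simp


theorem stmt12 (Ω lam T : ℝ) (hΩ : 0 < Ω) (hlam : 0 < lam) (hT : 0 < T) (N : ℕ)
    (g : ℝ → ℝ) (hg : IsPW Ω g) (β : ℝ) (hβ : ∀ t : ℝ, |g t| ≤ β)
    (hN : (T * Ω * Real.exp 1) ^ N * β < lam) :
    (∀ k : ℤ, fdiff^[N] (fun m : ℤ => g (m * T)) k =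
      Mlam lam (fdiff^[N] (fun m : ℤ => Mlam lam (g (m * T))) k)) ∧
    (∀ k : ℤ, ∃ j : ℤ, g (k * T) - Mlam lam (g (k * T)) = 2 * lam * j) ∧
    (∀ k : ℤ, fdiff^[N] (fun m : ℤ => g (m * T) - Mlam lam (g (m * T))) k =
      Mlam lam (fdiff^[N] (fun m : ℤ => Mlam lam (g (m * T))) k) -
        fdiff^[N] (fun m : ℤ => Mlam lam (g (m * T))) k) := by
  have hβ0 : 0 ≤ β := le_trans (abs_nonneg _) (hβ 0)
  have hmod : ∀ m : ℤ, ∃ j : ℤ, g (m * T) - Mlam lam (g (m * T)) = 2 * lam * j :=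
    fun m => ⟨⌊(g (m * T) + lam) / (2 * lam)⌋, by rw [Mlam]; ring⟩
  -- the key bound
  have hbound : ∀ k : ℤ, |fdiff^[N] (fun m : ℤ => g (m * T)) k| < lam := by
    intro k
    rw [fdiff_iterate]
    have h1 := pw_iter hΩ hT.le N g β hg hβ ((k : ℝ) * T)
    have he : (1:ℝ) ≤ Real.exp 1 := by
      have := Real.add_one_le_exp 1
      linarith
    have h2 : (T * Ω) ^ N ≤ (T * Ω * Real.exp 1) ^ N := by
      apply pow_le_pow_left₀ (by positivity)
      nlinarith [mul_pos hT hΩ]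
    have h3 : (T * Ω) ^ N * β ≤ (T * Ω * Real.exp 1) ^ N * β :=
      mul_le_mul_of_nonneg_right h2 hβ0
    linarith
  -- part 1
  have part1 : ∀ k : ℤ, fdiff^[N] (fun m : ℤ => g (m * T)) k =
      Mlam lam (fdiff^[N] (fun m : ℤ => Mlam lam (g (m * T))) k) := by
    intro k
    have hdiff : fdiff^[N] (fun m : ℤ => g (m * T) - Mlam lam (g (m * T))) k =
        fdiff^[N] (fun m : ℤ => g (m * T)) k -
          fdiff^[N] (fun m : ℤ => Mlam lam (g (m * T))) k :=
      fdiff_sub N _ _ k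
    obtain ⟨j, hj⟩ := fdiff_int N (fun m : ℤ => g (m * T) - Mlam lam (g (m * T))) hmod k
    have hy : fdiff^[N] (fun m : ℤ => Mlam lam (g (m * T))) k =
        fdiff^[N] (fun m : ℤ => g (m * T)) k + 2 * lam * (-j : ℤ) := by
      push_cast
      rw [hdiff] at hj
      linarith
    rw [hy, Mlam_add_int hlam]
    have h := hbound k
    rw [abs_lt] at h
    rw [Mlam_eq_self hlam (by linarith) h.2]
  refine ⟨part1, hmod, fun k => ?_⟩
  rw [fdiff_sub N _ _ k, ← part1 k]
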